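/- Consider the planar system ν' = -αν + f(wν+I) + (1/2)f''(wν+I)w²C, C' = -2αC + 2f'(wν+I)w(C + ν/N), and suppose f(I) = 0. Then (ν,C) = (0,0) is an equilibrium, and the Jacobian at (0,0) has trace 3(-α + wf'(I)) and determinant 2(-α + wf'(I))² − f'(I)f''(I)w³/N. In particular, if α = w f'(I) and f'(I) > 0, f''(I) < 0, w > 0, N > 0, the Jacobian at the origin has a pair of purely imaginary eigenvalues ±iω₀ with ω₀ = √(−f'(I)f''(I)w³/N). -/

import Mathlib

open Matrix Polynomial

private lemma aux_mul (g : ℝ → ℝ) (p₀ : ℝ × ℝ) (L : ℝ × ℝ →L[ℝ] ℝ) (hg : ContinuousAt g p₀.1)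
    (hL : L p₀ = 0) :
    HasFDerivAt (fun p : ℝ × ℝ => g p.1 * L p) (g p₀.1 • L) p₀ := by
  rw [hasFDerivAt_iff_isLittleO_nhds_zero]
  have h1 : (fun h : ℝ × ℝ => g (p₀ + h).1 - g p₀.1) =o[nhds 0] (fun _ => (1:ℝ)) := by
    rw [Asymptotics.isLittleO_one_iff]
    have hten : Filter.Tendsto (fun h : ℝ × ℝ => (p₀ + h).1) (nhds 0) (nhds p₀.1) := by
      have : Filter.Tendsto (fun h : ℝ × ℝ => p₀ + h) (nhds 0) (nhds p₀) := by
        simpa using (Filter.tendsto_id (α := ℝ × ℝ) (x := nhds 0)).const_add p₀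
      exact (continuous_fst.tendsto p₀).comp this
    have := hg.tendsto.comp hten
    simpa using (this.sub_const (g p₀.1))
  have h2 : (fun h : ℝ × ℝ => L h) =O[nhds (0:ℝ×ℝ)] (fun h => ‖h‖) := by
    apply Asymptotics.isBigO_iff.2 ⟨‖L‖, Filter.Eventually.of_forall fun h => by
      simpa using L.le_opNorm h⟩
  have := h1.mul_isBigO h2
  have heq : (fun h : ℝ × ℝ => g (p₀ + h).1 * L (p₀ + h) - g p₀.1 * L p₀ - (g p₀.1 • L) h)
      = fun h : ℝ × ℝ => (g (p₀ + h).1 - g p₀.1) * L h := by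
    funext h
    have : L (p₀ + h) = L h := by rw [map_add, hL, zero_add]
    simp [this, hL]
    ring
  rw [heq]
  calc (fun h : ℝ × ℝ => (g (p₀ + h).1 - g p₀.1) * L h)
      =o[nhds 0] (fun h : ℝ × ℝ => (1:ℝ) * ‖h‖) := this
    _ =O[nhds 0] (fun h : ℝ × ℝ => h) := by
        simpa using (Asymptotics.isBigO_refl (fun h : ℝ × ℝ => h) (nhds 0)).norm_left

private lemma charpoly_fin_two' {R : Type*} [CommRing R] (M : Matrix (Fin 2) (Fin 2) R) :
    M.charpoly = X^2 - C M.trace * X + C M.det := by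
  rw [Matrix.charpoly, Matrix.det_fin_two]
  simp [charmatrix_apply, Matrix.trace_fin_two, Matrix.det_fin_two]
  ring

theorem finite_size_hopf_eigenvalues
    (α w Ie N : ℝ) (hN : 0 < N) (f : ℝ → ℝ) (hf : ContDiff ℝ 2 f)
    (hfI : f Ie = 0) :
    -- the origin is an equilibrium
    (-α * 0 + f (w * 0 + Ie) + (1/2) * iteratedDeriv 2 f (w * 0 + Ie) * w^2 * 0 = 0 ∧
      -2 * α * 0 + 2 * deriv f (w * 0 + Ie) * w * (0 + 0 / N) = 0) ∧
    -- the Jacobian of the vector field at the origin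
    HasFDerivAt
      (fun p : ℝ × ℝ =>
        ((-α * p.1 + f (w * p.1 + Ie) + (1/2) * iteratedDeriv 2 f (w * p.1 + Ie) * w^2 * p.2,
          -2 * α * p.2 + 2 * deriv f (w * p.1 + Ie) * w * (p.2 + p.1 / N)) : ℝ × ℝ))
      (ContinuousLinearMap.prod
        ((-α + w * deriv f Ie) • ContinuousLinearMap.fst ℝ ℝ ℝ +
          ((1/2) * iteratedDeriv 2 f Ie * w^2) • ContinuousLinearMap.snd ℝ ℝ ℝ)
        ((2 * deriv f Ie * w / N) • ContinuousLinearMap.fst ℝ ℝ ℝ +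
          (-2 * α + 2 * deriv f Ie * w) • ContinuousLinearMap.snd ℝ ℝ ℝ))
      ((0 : ℝ), (0 : ℝ)) ∧
    -- trace and determinant of the Jacobian matrix
    (!![-α + w * deriv f Ie, (1/2) * iteratedDeriv 2 f Ie * w^2;
        2 * deriv f Ie * w / N, -2 * α + 2 * deriv f Ie * w] :
          Matrix (Fin 2) (Fin 2) ℝ).trace = 3 * (-α + w * deriv f Ie) ∧
    (!![-α + w * deriv f Ie, (1/2) * iteratedDeriv 2 f Ie * w^2;
        2 * deriv f Ie * w / N, -2 * α + 2 * deriv f Ie * w] :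
          Matrix (Fin 2) (Fin 2) ℝ).det =
      2 * (-α + w * deriv f Ie)^2 - deriv f Ie * iteratedDeriv 2 f Ie * w^3 / N ∧
    -- purely imaginary eigenvalues at the bifurcation point
    (α = w * deriv f Ie → 0 < deriv f Ie → iteratedDeriv 2 f Ie < 0 → 0 < w →
      ((!![-α + w * deriv f Ie, (1/2) * iteratedDeriv 2 f Ie * w^2;
          2 * deriv f Ie * w / N, -2 * α + 2 * deriv f Ie * w] :
            Matrix (Fin 2) (Fin 2) ℝ).map (Complex.ofReal)).charpoly =
        (X - C (Complex.I * (Real.sqrt (-(deriv f Ie) * iteratedDeriv 2 f Ie * w^3 / N) : ℝ))) *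
          (X - C (-(Complex.I *
            (Real.sqrt (-(deriv f Ie) * iteratedDeriv 2 f Ie * w^3 / N) : ℝ))))) := by
  have hNne : N ≠ 0 := ne_of_gt hN
  refine ⟨⟨by norm_num [hfI], by norm_num⟩, ?_, ?_, ?_, ?_⟩
  · -- HasFDerivAt
    set L1 := ContinuousLinearMap.fst ℝ ℝ ℝ
    set L2 := ContinuousLinearMap.snd ℝ ℝ ℝ
    have hfd : Differentiable ℝ f := hf.differentiable (by norm_num)
    have hd : HasDerivAt f (deriv f Ie) (w * ((0:ℝ),(0:ℝ)).1 + Ie) := by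
      simpa using (hfd Ie).hasDerivAt
    have hin : HasFDerivAt (fun p : ℝ × ℝ => w * p.1 + Ie) (w • L1) ((0:ℝ),(0:ℝ)) :=
      ((hasFDerivAt_fst (p := ((0:ℝ),(0:ℝ)))).const_mul w).add_const Ie
    have hB : HasFDerivAt (fun p : ℝ × ℝ => f (w * p.1 + Ie)) ((deriv f Ie) • (w • L1))
        ((0:ℝ),(0:ℝ)) := hd.comp_hasFDerivAt ((0:ℝ),(0:ℝ)) hin
    have hA : HasFDerivAt (fun p : ℝ × ℝ => -α * p.1) ((-α) • L1) ((0:ℝ),(0:ℝ)) :=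
      (hasFDerivAt_fst (p := ((0:ℝ),(0:ℝ)))).const_mul (-α)
    have hC := aux_mul (fun x => 1/2 * iteratedDeriv 2 f (w * x + Ie) * w^2)
      ((0:ℝ),(0:ℝ)) L2
      (by
        have h2 : Continuous (iteratedDeriv 2 f) := hf.continuous_iteratedDeriv 2 le_rfl
        exact ((continuous_const.mul
          (h2.comp ((continuous_const.mul continuous_id).add continuous_const))).mul
          continuous_const).continuousAt)
      rfl
    have hD0 : HasFDerivAt (fun p : ℝ × ℝ => -2 * α * p.2) ((-2 * α) • L2) ((0:ℝ),(0:ℝ)) :=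
      (hasFDerivAt_snd (p := ((0:ℝ),(0:ℝ)))).const_mul (-2 * α)
    have hE := aux_mul (fun x => 2 * deriv f (w * x + Ie) * w)
      ((0:ℝ),(0:ℝ)) (L2 + N⁻¹ • L1)
      (by
        have h1 : Continuous (deriv f) := hf.continuous_deriv (by norm_num)
        exact ((continuous_const.mul
          (h1.comp ((continuous_const.mul continuous_id).add continuous_const))).mul
          continuous_const).continuousAt)
      (by simp [L1, L2])
    have key := HasFDerivAt.prodMk ((hA.add hB).add hC) (hD0.add hE)
    have hFeq : (fun p : ℝ × ℝ =>
        ((-α * p.1 + f (w * p.1 + Ie) + (1/2) * iteratedDeriv 2 f (w * p.1 + Ie) * w^2 * p.2,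
          -2 * α * p.2 + 2 * deriv f (w * p.1 + Ie) * w * (p.2 + p.1 / N)) : ℝ × ℝ)) =
        (fun p : ℝ × ℝ =>
          (-α * p.1 + f (w * p.1 + Ie) +
              (fun x => 1/2 * iteratedDeriv 2 f (w * x + Ie) * w^2) p.1 * L2 p,
           -2 * α * p.2 + (fun x => 2 * deriv f (w * x + Ie) * w) p.1 * (L2 + N⁻¹ • L1) p)) := by
      funext p
      refine Prod.ext ?_ ?_ <;>
        simp only [ContinuousLinearMap.add_apply, ContinuousLinearMap.coe_smul', Pi.smul_apply,
          ContinuousLinearMap.coe_fst', ContinuousLinearMap.coe_snd', smul_eq_mul, L1, L2] <;>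
        ring
    have hDeq : (ContinuousLinearMap.prod
        (((-α) • L1 + (deriv f Ie) • (w • L1)) +
          ((fun x => 1/2 * iteratedDeriv 2 f (w * x + Ie) * w^2) ((0:ℝ),(0:ℝ)).1) • L2)
        ((-2 * α) • L2 +
          ((fun x => 2 * deriv f (w * x + Ie) * w) ((0:ℝ),(0:ℝ)).1) • (L2 + N⁻¹ • L1))) =
        (ContinuousLinearMap.prod
          ((-α + w * deriv f Ie) • L1 + ((1/2) * iteratedDeriv 2 f Ie * w^2) • L2)
          ((2 * deriv f Ie * w / N) • L1 + (-2 * α + 2 * deriv f Ie * w) • L2)) := by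
      refine ContinuousLinearMap.ext fun x => ?_
      refine Prod.ext ?_ ?_ <;>
        simp only [ContinuousLinearMap.prod_apply, ContinuousLinearMap.add_apply,
          ContinuousLinearMap.coe_smul', Pi.smul_apply, ContinuousLinearMap.coe_fst',
          ContinuousLinearMap.coe_snd', smul_eq_mul, L1, L2] <;>
        ring
    rw [hFeq, ← hDeq]
    exact key
  · simp [Matrix.trace_fin_two]
    ring
  · rw [Matrix.det_fin_two]
    simp
    field_simp
  · intro hα hf' hf'' hw
    subst hα
    set s := Real.sqrt (-(deriv f Ie) * iteratedDeriv 2 f Ie * w^3 / N) with hs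
    have hDpos : 0 ≤ -(deriv f Ie) * iteratedDeriv 2 f Ie * w^3 / N := by
      apply div_nonneg _ (le_of_lt hN)
      have : 0 ≤ -(deriv f Ie) * iteratedDeriv 2 f Ie := by nlinarith
      positivity
    have hs2 : s^2 = -(deriv f Ie) * iteratedDeriv 2 f Ie * w^3 / N := Real.sq_sqrt hDpos
    rw [charpoly_fin_two']
    have ht : (((!![-(w * deriv f Ie) + w * deriv f Ie, (1/2) * iteratedDeriv 2 f Ie * w^2;
          2 * deriv f Ie * w / N, -2 * (w * deriv f Ie) + 2 * deriv f Ie * w] :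
            Matrix (Fin 2) (Fin 2) ℝ).map (Complex.ofReal)).trace) = 0 := by
      simp [Matrix.trace_fin_two, Matrix.map_apply]
      push_cast
      ring
    have hd : (((!![-(w * deriv f Ie) + w * deriv f Ie, (1/2) * iteratedDeriv 2 f Ie * w^2;
          2 * deriv f Ie * w / N, -2 * (w * deriv f Ie) + 2 * deriv f Ie * w] :
            Matrix (Fin 2) (Fin 2) ℝ).map (Complex.ofReal)).det) = ((s^2 : ℝ) : ℂ) := by
      rw [Matrix.det_fin_two]
      simp [Matrix.map_apply, hs2]
      push_cast
      field_simp
    rw [ht, hd]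
    have hIs : (C (Complex.I * (s:ℂ))) * (C (-(Complex.I * (s:ℂ)))) = C (((s^2:ℝ)):ℂ) := by
      rw [← C_mul]
      congr 1
      push_cast
      linear_combination (-(s:ℂ)^2) * Complex.I_sq
    rw [map_zero, ← hIs]
    simp only [map_neg]
    ring
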